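/- Let N ≥ 1 and for k ∈ {1,…,N} let α_k > 0 with ∑_{k=1}^N α_k = 1, let A_k > 0, and let G_k ∈ ℝ and d ∈ ℝ. Suppose F'_1,…,F'_N are real numbers such that ∑_{k=1}^N F'_k = 0 and the quantity −(A_k/α_k)·F'_k + G_k/α_k − A_k·d is the same for all k. Then F'_k = α_k·((A − A_k)/A_k)·d + A·∑_{j≠k} (G_k α_j − G_j α_k)/(A_k A_j) for all k, where A is defined by 1/A = ∑_{k=1}^N α_k/A_k. -/

import Mathlib

open Finset

/-- The harmonic-mean acoustic impedance A, defined by 1/A = ∑ α_k/A_k. -/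
noncomputable def Amix {N : ℕ} (α A : Fin N → ℝ) : ℝ := (∑ j, α j / A j)⁻¹

/-- The leading-order volume-fraction exchange term F_k^{sum,(0)}
of equation (2.24). -/
noncomputable def Fk {N : ℕ} (α A G : Fin N → ℝ) (d : ℝ) (k : Fin N) : ℝ :=
  α k * ((Amix α A - A k) / A k) * d
    + Amix α A * ∑ j ∈ Finset.univ.erase k, (G k * α j - G j * α k) / (A k * A j)

/-- Uniqueness: if exchange terms F'_k sum to zero and make all the phase
pressure derivatives −(A_k/α_k)F'_k + G_k/α_k − A_k d coincide, then they are
given by formula (2.24). -/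
theorem Fk_unique (N : ℕ) (hN : 1 ≤ N) (α A G : Fin N → ℝ) (d : ℝ)
    (hα : ∀ k, 0 < α k) (hsum : ∑ k, α k = 1) (hA : ∀ k, 0 < A k)
    (F' : Fin N → ℝ) (hF'sum : ∑ k, F' k = 0)
    (hF'eq : ∀ k l : Fin N,
      -(A k / α k) * F' k + G k / α k - A k * d
        = -(A l / α l) * F' l + G l / α l - A l * d) :
    ∀ k, F' k = Fk α A G d k := by
  have hA0 : ∀ j, A j ≠ 0 := fun j => (hA j).ne'
  have hα0 : ∀ j, α j ≠ 0 := fun j => (hα j).ne'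
  set T : ℝ := ∑ j, α j / A j with hT
  have hTpos : 0 < T :=
    Finset.sum_pos (fun j _ => div_pos (hα j) (hA j)) ⟨⟨0, hN⟩, Finset.mem_univ _⟩
  have hT0 : T ≠ 0 := hTpos.ne'
  set S : ℝ := ∑ j, G j / A j with hS
  set k0 : Fin N := ⟨0, hN⟩
  set c : ℝ := -(A k0 / α k0) * F' k0 + G k0 / α k0 - A k0 * d with hc
  clear_value c
  have key : ∀ j, F' j = G j / A j - α j * d - c * (α j / A j) := by
    intro j
    have h := hF'eq j k0
    rw [← hc] at h
    have hαj := hα0 j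
    have hAj := hA0 j
    have h2 : F' j * (A j * α j) = (G j / A j - α j * d - c * (α j / A j)) * (A j * α j) := by
      field_simp
      field_simp at h
      linear_combination -h
    exact mul_right_cancel₀ (mul_ne_zero hAj hαj) h2
  have hsum2 : S - d - c * T = 0 := by
    have h0 : (0 : ℝ) = ∑ j, (G j / A j - α j * d - c * (α j / A j)) := by
      rw [← hF'sum]; exact Finset.sum_congr rfl fun j _ => key j
    have h1 : ∑ j, (G j / A j - α j * d - c * (α j / A j))
        = S - (∑ j, α j) * d - c * T := by
      rw [Finset.sum_sub_distrib, Finset.sum_sub_distrib, ← Finset.sum_mul,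
        ← Finset.mul_sum]
    rw [h1, hsum] at h0
    linarith
  have hcval : c = (S - d) / T := by
    field_simp
    linarith
  intro k
  have herase : ∑ j ∈ Finset.univ.erase k, (G k * α j - G j * α k) / (A k * A j)
      = (G k * (T - α k / A k) - α k * (S - G k / A k)) / A k := by
    have h1 : ∀ j, (G k * α j - G j * α k) / (A k * A j)
        = (G k * (α j / A j) - α k * (G j / A j)) / A k := by
      intro j; field_simp
    rw [Finset.sum_congr rfl fun j _ => h1 j, ← Finset.sum_div]
    congr 1
    rw [Finset.sum_sub_distrib, ← Finset.mul_sum, ← Finset.mul_sum,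
      Finset.sum_erase_eq_sub (Finset.mem_univ k),
      Finset.sum_erase_eq_sub (Finset.mem_univ k)]
  rw [key k, hcval, Fk, herase]
  show _ = α k * (((∑ j, α j / A j)⁻¹ - A k) / A k) * d
    + (∑ j, α j / A j)⁻¹ * ((G k * (T - α k / A k) - α k * (S - G k / A k)) / A k)
  rw [← hT]
  field_simp [hT0, hA0 k]
  ring
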